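/- Count of interpolation entries (Theorem 5, counting part): with two-side nested interpolation sets of sizes r_1,…,r_{d−1} (and r_0 = r_d = 1), the union over k = 1,…,d of the entry sets {(j_{≤k−1}, i_k, j_{>k}) : j_{≤k−1} ∈ I^{≤k−1}, i_k arbitrary, j_{>k} ∈ I^{>k}} has cardinality exactly Σ_{k=1}^{d} r_{k−1} n_k r_k − Σ_{k=1}^{d−1} r_k², because consecutive blocks intersect exactly in the sets I^{≤k} × I^{>k} of size r_k², and non-consecutive overlaps are contained in these. -/

import Mathlib

variable (d : ℕ) (n : Fin d → ℕ)

/-- The `k`-th block of interpolated entries: full indices whose prefix before mode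
`m` lies in the left set and whose suffix after mode `m` lies in the right set. -/
def interpBlock
    (L : (k : ℕ) → Finset ((j : {j : Fin d // j.val < k}) → Fin (n j.1)))
    (R : (k : ℕ) → Finset ((j : {j : Fin d // k ≤ j.val}) → Fin (n j.1)))
    (m : Fin d) : Finset ((j : Fin d) → Fin (n j)) :=
  Finset.univ.filter fun i =>
    ((fun j : {j : Fin d // j.val < m.val} => i j.1) ∈ L m.val) ∧
    ((fun j : {j : Fin d // m.val + 1 ≤ j.val} => i j.1) ∈ R (m.val + 1))

lemma card_split (t : ℕ) (Lt : Finset ((j : {j : Fin d // j.val < t}) → Fin (n j.1)))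
    (Rt : Finset ((j : {j : Fin d // t ≤ j.val}) → Fin (n j.1))) :
    (Finset.univ.filter fun i : (j : Fin d) → Fin (n j) =>
      ((fun j : {j : Fin d // j.val < t} => i j.1) ∈ Lt) ∧
      ((fun j : {j : Fin d // t ≤ j.val} => i j.1) ∈ Rt)).card = Lt.card * Rt.card := by
  rw [← Finset.card_product]
  apply Finset.card_nbij'
    (fun i : (j : Fin d) → Fin (n j) =>
      ((fun j : {j : Fin d // j.val < t} => i j.1),
       (fun j : {j : Fin d // t ≤ j.val} => i j.1)))
    (fun pq : ((j : {j : Fin d // j.val < t}) → Fin (n j.1)) ×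
        ((j : {j : Fin d // t ≤ j.val}) → Fin (n j.1)) =>
      fun j : Fin d => if h : j.val < t then pq.1 ⟨j, h⟩ else pq.2 ⟨j, not_lt.mp h⟩)
  · intro i hi
    simp only [Finset.mem_coe, Finset.mem_filter, Finset.mem_univ, true_and] at hi
    simpa [Finset.mem_product] using hi
  · intro pq hpq
    simp only [Finset.mem_coe, Finset.mem_product] at hpq
    simp only [Finset.mem_coe, Finset.mem_filter, Finset.mem_univ, true_and]
    refine ⟨?_, ?_⟩
    · have he : (fun j : {j : Fin d // j.val < t} =>
          if h : (j : Fin d).val < t then pq.1 ⟨j, h⟩ else pq.2 ⟨j, not_lt.mp h⟩) = pq.1 :=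
        funext fun j => dif_pos j.2
      rw [he]; exact hpq.1
    · have he : (fun j : {j : Fin d // t ≤ (j : Fin d).val} =>
          if h : (j : Fin d).val < t then pq.1 ⟨j, h⟩ else pq.2 ⟨j, not_lt.mp h⟩) = pq.2 :=
        funext fun j => dif_neg (Nat.not_lt.mpr j.2)
      rw [he]; exact hpq.2
  · intro i _
    funext j
    by_cases h : j.val < t
    · exact dif_pos h
    · exact dif_neg h
  · intro pq _
    refine Prod.ext ?_ ?_
    · exact funext fun j => dif_pos j.2
    · exact funext fun j => dif_neg (Nat.not_lt.mpr j.2)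

lemma Rmono (R : (k : ℕ) → Finset ((j : {j : Fin d // k ≤ j.val}) → Fin (n j.1)))
    (hnestR : ∀ k, ∀ q ∈ R k,
      (fun j : {j : Fin d // k + 1 ≤ j.val} => q ⟨j.1, Nat.le_of_succ_le j.2⟩) ∈ R (k + 1))
    (i : (j : Fin d) → Fin (n j)) :
    ∀ a b, a ≤ b → ((fun j : {j : Fin d // a ≤ j.val} => i j.1) ∈ R a) →
      ((fun j : {j : Fin d // b ≤ j.val} => i j.1) ∈ R b) := by
  intro a b hab
  induction b, hab using Nat.le_induction with
  | base => exact id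
  | succ b hb ih => intro h; exact hnestR b _ (ih h)

/-- Theorem 5 (counting part): with two-side nested interpolation sets of sizes
`r 1, …, r (d−1)` (and `r 0 = r d = 1`), the union of the interpolation blocks
contains exactly `Σ_{k=1}^d r_{k-1} n_k r_k − Σ_{k=1}^{d-1} r_k²` tensor entries. -/
theorem nested_interpolation_entry_count (r : ℕ → ℕ)
    (hr0 : r 0 = 1) (hrd : r d = 1)
    (L : (k : ℕ) → Finset ((j : {j : Fin d // j.val < k}) → Fin (n j.1)))
    (R : (k : ℕ) → Finset ((j : {j : Fin d // k ≤ j.val}) → Fin (n j.1)))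
    (hL : ∀ k ≤ d, (L k).card = r k) (hR : ∀ k ≤ d, (R k).card = r k)
    (hnestL : ∀ k, ∀ p ∈ L (k + 1),
      (fun j : {j : Fin d // j.val < k} => p ⟨j.1, Nat.lt_succ_of_lt j.2⟩) ∈ L k)
    (hnestR : ∀ k, ∀ q ∈ R k,
      (fun j : {j : Fin d // k + 1 ≤ j.val} => q ⟨j.1, Nat.le_of_succ_le j.2⟩) ∈ R (k + 1))
    (hblock : ∀ m : Fin d,
      (interpBlock d n L R m).card = r m.val * n m * r (m.val + 1)) :
    (Finset.univ.biUnion (interpBlock d n L R)).card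
      = ∑ m : Fin d, r m.val * n m * r (m.val + 1)
        - ∑ k ∈ Finset.Icc 1 (d - 1), r k ^ 2 := by
  set B := interpBlock d n L R with hB
  have key : ∀ t ≤ d,
      ((Finset.univ.filter fun m : Fin d => m.val < t).biUnion B).card
        + ∑ k ∈ Finset.Icc 1 (t - 1), r k ^ 2
      = ∑ m ∈ Finset.univ.filter (fun m : Fin d => m.val < t),
          r m.val * n m * r (m.val + 1) := by
    intro t
    induction t with
    | zero => simp
    | succ t ih =>
      intro ht1
      have ht : t < d := ht1
      have ihe := ih (Nat.le_of_lt ht1)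
      have hfe : (Finset.univ.filter fun m : Fin d => m.val < t + 1)
          = insert ⟨t, ht⟩ (Finset.univ.filter fun m : Fin d => m.val < t) := by
        ext m
        simp only [Finset.mem_filter, Finset.mem_univ, true_and, Finset.mem_insert,
          Fin.ext_iff]
        omega
      have hnotmem : (⟨t, ht⟩ : Fin d) ∉
          (Finset.univ.filter fun m : Fin d => m.val < t) := by simp
      rw [hfe, Finset.biUnion_insert, Finset.sum_insert hnotmem]
      have hunion := Finset.card_union_add_card_inter (B ⟨t, ht⟩)
        ((Finset.univ.filter fun m : Fin d => m.val < t).biUnion B)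
      have hbl := hblock ⟨t, ht⟩
      rcases t with _ | s
      · have hU0 : (Finset.univ.filter fun m : Fin d => m.val < 0) = ∅ := by simp
        rw [hU0]
        simpa using hbl
      · -- t = s + 1 ≥ 1
        have hinter : B ⟨s + 1, ht⟩ ∩
            ((Finset.univ.filter fun m : Fin d => m.val < s + 1).biUnion B)
            = Finset.univ.filter fun i : (j : Fin d) → Fin (n j) =>
                ((fun j : {j : Fin d // j.val < s + 1} => i j.1) ∈ L (s + 1)) ∧
                ((fun j : {j : Fin d // s + 1 ≤ j.val} => i j.1) ∈ R (s + 1)) := by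
          ext i
          simp only [Finset.mem_inter, Finset.mem_biUnion, Finset.mem_filter,
            Finset.mem_univ, true_and, hB, interpBlock]
          constructor
          · rintro ⟨⟨hp, _⟩, m, hm, _, hq'⟩
            exact ⟨hp, Rmono d n R hnestR i (m.val + 1) (s + 1) (by omega) hq'⟩
          · rintro ⟨hp, hq⟩
            exact ⟨⟨hp, Rmono d n R hnestR i (s + 1) (s + 2) (Nat.le_succ _) hq⟩,
              ⟨⟨s, Nat.lt_of_succ_lt ht⟩, Nat.lt_succ_self s, hnestL s _ hp, hq⟩⟩
        have hic : (B ⟨s + 1, ht⟩ ∩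
            ((Finset.univ.filter fun m : Fin d => m.val < s + 1).biUnion B)).card
            = r (s + 1) * r (s + 1) := by
          rw [hinter, card_split, hL (s + 1) (Nat.le_of_lt ht), hR (s + 1) (Nat.le_of_lt ht)]
        have hsum : ∑ k ∈ Finset.Icc 1 (s + 1 + 1 - 1), r k ^ 2
            = (∑ k ∈ Finset.Icc 1 (s + 1 - 1), r k ^ 2) + r (s + 1) ^ 2 := by
          have h1 : s + 1 + 1 - 1 = s + 1 := rfl
          have h2 : s + 1 - 1 = s := rfl
          rw [h1, h2, Finset.sum_Icc_succ_top (Nat.le_add_left 1 s)]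
        have hpow : r (s + 1) ^ 2 = r (s + 1) * r (s + 1) := by ring
        simp only [Fin.val_mk] at hbl hunion hic ⊢
        omega
  have hfinal := key d le_rfl
  have huniv : (Finset.univ.filter fun m : Fin d => m.val < d) = Finset.univ := by
    ext m; simp [m.isLt]
  rw [huniv] at hfinal
  omega
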